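/- Let N_T ≥ 1 and d ≥ 1 be integers, Δt a nonzero real number and c_a ∈ ℂ. Let 𝔸_1, …, 𝔸_{N_T}, 𝕄, M^Γ be d×d complex matrices, and let Y^{n,p} be d×d complex matrices for 1 ≤ p ≤ n ≤ N_T. Let u_0 ∈ ℂ^d, v_1, …, v_{N_T} ∈ ℂ^d, c_1, …, c_{N_T} ∈ ℂ^d, and define u_n = 2·v_n − u_{n−1} for 1 ≤ n ≤ N_T. Then the following are equivalent: (a) for every 1 ≤ n ≤ N_T, (𝔸_n + c_a·M^Γ)·v_n + ∑_{p=1}^{n} Y^{n,p}·v_p = (2i/Δt)·𝕄·u_{n−1} + c_n; (b) the stacked vector v = (v_1, …, v_{N_T}) satisfies (𝐀 − 𝐁)·v = F + c, where 𝐀 is the N_T×N_T block matrix with (n,n) block 𝔸_n, (n,s) block (−1)^{n−s}·(4i/Δt)·𝕄 for s < n and zero blocks above the diagonal, F has n-th component (−1)^{n−1}·(2i/Δt)·𝕄·u_0, c = (c_1, …, c_{N_T}), and 𝐁 is the block lower triangular N_T×N_T block matrix whose (n,n) block is −(c_a·M^Γ + Y^{n,n}), whose (n,p) block for p < n is −Y^{n,p},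 and whose blocks above the diagonal are zero. -/

import Mathlib

open Matrix Complex

/-- Global-in-time reformulation of the Crank–Nicolson time steps with the
Padé transmission condition `S_pade^m`: the per-step systems
`(𝔸ₙ + c_a M^Γ) vₙ + ∑_{p=1}^n Y^{n,p} v_p = (2i/Δt) 𝕄 u_{n-1} + cₙ`
(where `uₙ = 2 vₙ - u_{n-1}`) hold for all `n` iff the stacked vector `v` solves
`(𝐀 - 𝐁) v = F + c`, where `𝐀` has diagonal blocks `𝔸ₙ` and subdiagonal blocks
`(-1)^(n-s) (4i/Δt) 𝕄`, `F` has `n`-th component `(-1)^(n-1) (2i/Δt) 𝕄 u₀`, and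
`𝐁` is block lower triangular with `(n,n)` block `-(c_a M^Γ + Y^{n,n})` and
`(n,p)` block `-Y^{n,p}` for `p < n`.
Here `n : Fin N_T` labels the time step `n+1` (1-based), so `u n.val` is `u_{n-1}`,
and the sum `∑_{p=1}^n` becomes a sum over `p ∈ Finset.Iic n`. -/
theorem global_in_time_pade (N_T d : ℕ) (hNT : 1 ≤ N_T) (hd : 1 ≤ d)
    (Δt : ℝ) (hΔt : Δt ≠ 0) (c_a : ℂ)
    (𝔸 : Fin N_T → Matrix (Fin d) (Fin d) ℂ)
    (𝕄 MΓ : Matrix (Fin d) (Fin d) ℂ)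
    (Y : Fin N_T → Fin N_T → Matrix (Fin d) (Fin d) ℂ)
    (u₀ : Fin d → ℂ) (v c : Fin N_T → Fin d → ℂ)
    (u : ℕ → Fin d → ℂ) (hu0 : u 0 = u₀)
    (hu : ∀ n : Fin N_T, u ((n : ℕ) + 1) = (2 : ℂ) • v n - u (n : ℕ)) :
    (∀ n : Fin N_T,
        (𝔸 n + c_a • MΓ) *ᵥ v n + ∑ p ∈ Finset.Iic n, (Y n p) *ᵥ v p
          = (2 * Complex.I / (Δt : ℂ)) • (𝕄 *ᵥ u (n : ℕ)) + c n)
    ↔ ((fun x y => if x.1 = y.1 then 𝔸 x.1 x.2 y.2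
          else if y.1 < x.1 then
            (-1 : ℂ) ^ ((x.1 : ℕ) - (y.1 : ℕ)) * (4 * Complex.I / (Δt : ℂ)) * 𝕄 x.2 y.2
          else 0 : Matrix (Fin N_T × Fin d) (Fin N_T × Fin d) ℂ)
        - (fun x y => if x.1 = y.1 then (-(c_a • MΓ + Y x.1 x.1)) x.2 y.2
            else if y.1 < x.1 then (-(Y x.1 y.1)) x.2 y.2
            else 0 : Matrix (Fin N_T × Fin d) (Fin N_T × Fin d) ℂ))
        *ᵥ (fun x : Fin N_T × Fin d => v x.1 x.2)
      = (fun x : Fin N_T × Fin d =>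
          (-1 : ℂ) ^ (x.1 : ℕ) * (2 * Complex.I / (Δt : ℂ)) * (𝕄 *ᵥ u₀) x.2)
        + (fun x : Fin N_T × Fin d => c x.1 x.2) := by
  classical
  -- closed form for u
  have hun : ∀ m : ℕ, m ≤ N_T → ∀ k : Fin d,
      u m k = (-1:ℂ)^m * u₀ k
        + ∑ p ∈ Finset.univ.filter (fun p : Fin N_T => (p:ℕ) < m),
            (-1:ℂ)^(m - 1 - (p:ℕ)) * 2 * v p k := by
    intro m
    induction m with
    | zero =>
      intro _ k
      simp [hu0]
    | succ m ih =>
      intro hm k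
      have hmN : m < N_T := hm
      set q : Fin N_T := ⟨m, hmN⟩ with hq
      have hstep := congrFun (hu q) k
      simp only [hq] at hstep
      have hfil : Finset.univ.filter (fun p : Fin N_T => (p:ℕ) < m + 1)
          = insert q (Finset.univ.filter (fun p : Fin N_T => (p:ℕ) < m)) := by
        ext p
        simp only [Finset.mem_filter, Finset.mem_insert, Finset.mem_univ, true_and]
        constructor
        · intro hp
          rcases Nat.lt_succ_iff_lt_or_eq.mp hp with h | h
          · exact Or.inr h
          · exact Or.inl (Fin.ext h)
        · rintro (rfl | h)
          · exact Nat.lt_succ_self m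
          · exact Nat.lt_succ_of_lt h
      have hqnot : q ∉ Finset.univ.filter (fun p : Fin N_T => (p:ℕ) < m) := by
        simp [hq]
      rw [hstep, hfil, Finset.sum_insert hqnot]
      have hq0 : (m + 1 - 1 - (q:ℕ)) = 0 := by simp [hq]
      rw [hq0]
      have hterm : ∀ p ∈ Finset.univ.filter (fun p : Fin N_T => (p:ℕ) < m),
          (-1:ℂ)^(m + 1 - 1 - (p:ℕ)) * 2 * v p k
            = -((-1:ℂ)^(m - 1 - (p:ℕ)) * 2 * v p k) := by
        intro p hp
        simp only [Finset.mem_filter] at hp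
        have : m + 1 - 1 - (p:ℕ) = (m - 1 - (p:ℕ)) + 1 := by omega
        rw [this, pow_succ]
        ring
      rw [Finset.sum_congr rfl hterm, Finset.sum_neg_distrib]
      have := ih (Nat.le_of_succ_le hm) k
      rw [Pi.sub_apply, Pi.smul_apply, smul_eq_mul, this, pow_succ]
      ring
  set r : ℂ := 2 * Complex.I / (Δt : ℂ) with hr
  set T : Fin N_T → Fin d → ℂ := fun n j =>
    ∑ s ∈ Finset.Iio n, (-1:ℂ)^((n:ℕ) - (s:ℕ)) * (4 * Complex.I / (Δt : ℂ)) * (𝕄 *ᵥ v s) j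
    with hT
  -- Left side of global system
  have hL : ∀ (n : Fin N_T) (j : Fin d),
      (((fun x y => if x.1 = y.1 then 𝔸 x.1 x.2 y.2
          else if y.1 < x.1 then
            (-1 : ℂ) ^ ((x.1 : ℕ) - (y.1 : ℕ)) * (4 * Complex.I / (Δt : ℂ)) * 𝕄 x.2 y.2
          else 0 : Matrix (Fin N_T × Fin d) (Fin N_T × Fin d) ℂ)
        - (fun x y => if x.1 = y.1 then (-(c_a • MΓ + Y x.1 x.1)) x.2 y.2
            else if y.1 < x.1 then (-(Y x.1 y.1)) x.2 y.2
            else 0 : Matrix (Fin N_T × Fin d) (Fin N_T × Fin d) ℂ))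
        *ᵥ (fun x : Fin N_T × Fin d => v x.1 x.2)) (n, j)
      = ((𝔸 n + c_a • MΓ) *ᵥ v n + ∑ p ∈ Finset.Iic n, (Y n p) *ᵥ v p) j + T n j := by
    intro n j
    erw [mulVec_apply_eq_sum, Fintype.sum_prod_type]
    have hrow : ∀ s : Fin N_T,
        (∑ k : Fin d, ((fun x y => if x.1 = y.1 then 𝔸 x.1 x.2 y.2
          else if y.1 < x.1 then
            (-1 : ℂ) ^ ((x.1 : ℕ) - (y.1 : ℕ)) * (4 * Complex.I / (Δt : ℂ)) * 𝕄 x.2 y.2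
          else 0 : Matrix (Fin N_T × Fin d) (Fin N_T × Fin d) ℂ)
        - (fun x y => if x.1 = y.1 then (-(c_a • MΓ + Y x.1 x.1)) x.2 y.2
            else if y.1 < x.1 then (-(Y x.1 y.1)) x.2 y.2
            else 0 : Matrix (Fin N_T × Fin d) (Fin N_T × Fin d) ℂ)) (n, j) (s, k) * v s k)
        = if n = s then
            (((𝔸 n + c_a • MΓ) *ᵥ v n) j + ((Y n n) *ᵥ v n) j)
          else if s < n then
            ((-1:ℂ)^((n:ℕ) - (s:ℕ)) * (4 * Complex.I / (Δt : ℂ)) * (𝕄 *ᵥ v s) j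
              + ((Y n s) *ᵥ v s) j)
          else 0 := by
      intro s
      by_cases h1 : n = s
      · subst h1
        simp only [Pi.sub_apply, if_pos rfl, if_true, eq_self_iff_true, mulVec, dotProduct,
          Matrix.add_apply, Matrix.neg_apply, Matrix.smul_apply, smul_eq_mul]
        rw [← Finset.sum_add_distrib]
        refine Finset.sum_congr rfl fun k _ => by ring
      · by_cases h2 : s < n
        · simp only [Pi.sub_apply, if_neg h1, if_pos h2, Matrix.neg_apply,
            mulVec, dotProduct, Finset.mul_sum]
          rw [← Finset.sum_add_distrib]
          refine Finset.sum_congr rfl fun k _ => by ring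
        · simp [Pi.sub_apply, if_neg h1, if_neg h2]
    rw [Finset.sum_congr rfl (fun s _ => hrow s)]
    have hsubset : Finset.Iic n ⊆ (Finset.univ : Finset (Fin N_T)) := Finset.subset_univ _
    rw [← Finset.sum_subset hsubset (by
      intro s _ hs
      simp only [Finset.mem_Iic] at hs
      have h1 : n ≠ s := fun h => hs (le_of_eq h.symm)
      have h2 : ¬ s < n := fun h => hs (le_of_lt h)
      rw [if_neg h1, if_neg h2])]
    have hIic : Finset.Iic n = insert n (Finset.Iio n) := by
      ext s; simp [Finset.mem_Iic, Finset.mem_Iio, le_iff_lt_or_eq, or_comm]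
    rw [hIic, Finset.sum_insert (by simp)]
    rw [if_pos rfl]
    have hIio : ∀ s ∈ Finset.Iio n,
        (if n = s then (((𝔸 n + c_a • MΓ) *ᵥ v n) j + ((Y n n) *ᵥ v n) j)
          else if s < n then
            ((-1:ℂ)^((n:ℕ) - (s:ℕ)) * (4 * Complex.I / (Δt : ℂ)) * (𝕄 *ᵥ v s) j
              + ((Y n s) *ᵥ v s) j)
          else 0)
        = (-1:ℂ)^((n:ℕ) - (s:ℕ)) * (4 * Complex.I / (Δt : ℂ)) * (𝕄 *ᵥ v s) j
              + ((Y n s) *ᵥ v s) j := by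
      intro s hs
      simp only [Finset.mem_Iio] at hs
      rw [if_neg (ne_of_lt hs).symm, if_pos hs]
    rw [Finset.sum_congr rfl hIio, Finset.sum_add_distrib]
    have hIicIio : ∑ p ∈ Finset.Iic n, ((Y n p) *ᵥ v p) j
        = ((Y n n) *ᵥ v n) j + ∑ p ∈ Finset.Iio n, ((Y n p) *ᵥ v p) j := by
      rw [hIic, Finset.sum_insert (by simp)]
    simp only [Pi.add_apply, Finset.sum_apply, hT]
    rw [Finset.sum_insert (by simp : n ∉ Finset.Iio n)]
    ring
  -- Right side of global system
  have hR : ∀ (n : Fin N_T) (j : Fin d),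
      ((fun x : Fin N_T × Fin d =>
          (-1 : ℂ) ^ (x.1 : ℕ) * (2 * Complex.I / (Δt : ℂ)) * (𝕄 *ᵥ u₀) x.2)
        + (fun x : Fin N_T × Fin d => c x.1 x.2)) (n, j)
      = ((2 * Complex.I / (Δt : ℂ)) • (𝕄 *ᵥ u (n : ℕ)) + c n) j + T n j := by
    intro n j
    have hMu : (𝕄 *ᵥ u (n : ℕ)) j
        = (-1:ℂ)^(n:ℕ) * (𝕄 *ᵥ u₀) j
          + ∑ p ∈ Finset.Iio n, (-1:ℂ)^((n:ℕ) - 1 - (p:ℕ)) * 2 * (𝕄 *ᵥ v p) j := by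
      have hfilt : Finset.univ.filter (fun p : Fin N_T => (p:ℕ) < (n:ℕ)) = Finset.Iio n := by
        ext p; simp only [Finset.mem_filter, Finset.mem_univ, true_and, Finset.mem_Iio]; exact Iff.rfl
      rw [mulVec_apply_eq_sum]
      rw [Finset.sum_congr rfl (fun k _ => by
        rw [hun (n:ℕ) (le_of_lt n.isLt) k, hfilt])]
      simp only [mul_add, Finset.mul_sum, Finset.sum_add_distrib]
      congr 1
      · rw [mulVec_apply_eq_sum, Finset.mul_sum]
        refine Finset.sum_congr rfl fun k _ => by ring
      · rw [Finset.sum_comm]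
        refine Finset.sum_congr rfl fun p _ => ?_
        rw [mulVec_apply_eq_sum, Finset.mul_sum]
        refine Finset.sum_congr rfl fun k _ => by ring
    simp only [Pi.add_apply, Pi.smul_apply, smul_eq_mul, hMu, hT]
    have hsum : ∑ s ∈ Finset.Iio n, (-1:ℂ)^((n:ℕ) - (s:ℕ)) * (4 * Complex.I / (Δt : ℂ)) * (𝕄 *ᵥ v s) j
        = ∑ s ∈ Finset.Iio n,
            -((2 * Complex.I / (Δt : ℂ)) * ((-1:ℂ)^((n:ℕ) - 1 - (s:ℕ)) * 2 * (𝕄 *ᵥ v s) j)) := by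
      refine Finset.sum_congr rfl fun s hs => ?_
      simp only [Finset.mem_Iio] at hs
      have hlt : (s:ℕ) < (n:ℕ) := hs
      have hpow : (n:ℕ) - (s:ℕ) = ((n:ℕ) - 1 - (s:ℕ)) + 1 := by omega
      rw [hpow, pow_succ]
      ring
    rw [hsum, Finset.sum_neg_distrib, mul_add, Finset.mul_sum]
    ring
  constructor
  · intro h
    funext x
    obtain ⟨n, j⟩ := x
    rw [hL n j, hR n j, congrFun (h n) j]
  · intro h n
    funext j
    have hx := congrFun h (n, j)
    rw [hL n j, hR n j] at hx
    exact add_right_cancel hx
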